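/- Fix r ≥ 1 and let p(x) ∈ ℤ[x] be a monic polynomial dividing x^r − 1. Let G be a cyclic group of order r with generator σ acting on the free ℤ-module Λ = ℤ[x]/(p(x)) by letting σ act as multiplication by x. Then the group cohomology H¹(G, Λ) is cyclic of order |p(1)|, generated by the class of 1 ∈ ℤ[x]; in particular H¹(G, Λ) is trivial when p(1) = 0. -/

import Mathlib

open Polynomial

private lemma p_dvd_geom_sum (r : ℕ) (p : Polynomial ℤ) (hmonic : p.Monic)
    (hdvd : p ∣ Polynomial.X ^ r - 1) (h1 : p.eval 1 ≠ 0) :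
    p ∣ ∑ i ∈ Finset.range r, Polynomial.X ^ i := by
  set s : Polynomial ℤ := ∑ i ∈ Finset.range r, Polynomial.X ^ i with hs
  have hgeom : s * (X - 1) = X ^ r - 1 := geom_sum_mul X r
  have hmap : ∀ q : Polynomial ℤ, (q.map (Int.castRingHom ℚ)).eval 1 = ((q.eval 1 : ℤ) : ℚ) := by
    intro q
    simpa using eval_one_map (Int.castRingHom ℚ) q
  -- over ℚ
  have hPdvd : p.map (Int.castRingHom ℚ) ∣ s.map (Int.castRingHom ℚ) := by
    have hco : IsCoprime (p.map (Int.castRingHom ℚ)) ((X : ℚ[X]) - C 1) := by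
      rw [isCoprime_comm, (irreducible_X_sub_C (1 : ℚ)).coprime_iff_not_dvd]
      rw [dvd_iff_isRoot]
      intro hroot
      rw [IsRoot] at hroot
      rw [hmap p] at hroot
      exact h1 (by exact_mod_cast hroot)
    have hdvd' : p.map (Int.castRingHom ℚ) ∣ s.map (Int.castRingHom ℚ) * ((X : ℚ[X]) - C 1) := by
      have : p.map (Int.castRingHom ℚ) ∣ (X ^ r - 1 : Polynomial ℤ).map (Int.castRingHom ℚ) :=
        Polynomial.map_dvd _ hdvd
      rw [← hgeom] at this
      simpa using this
    exact hco.dvd_of_dvd_mul_right hdvd'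
  -- back to ℤ
  have hmod : s %ₘ p = 0 := by
    have hmapmod : (s %ₘ p).map (Int.castRingHom ℚ)
        = s.map (Int.castRingHom ℚ) %ₘ p.map (Int.castRingHom ℚ) :=
      map_modByMonic _ hmonic
    have : s.map (Int.castRingHom ℚ) %ₘ p.map (Int.castRingHom ℚ) = 0 :=
      (modByMonic_eq_zero_iff_dvd (hmonic.map _)).mpr hPdvd
    rw [this] at hmapmod
    exact Polynomial.map_injective _ (RingHom.injective_int _) (by simpa using hmapmod)
  exact (modByMonic_eq_zero_iff_dvd hmonic).mp hmod

set_option maxHeartbeats 2000000 in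
theorem stmt_3 (r : ℕ) (hr : 1 ≤ r) (p : Polynomial ℤ) (hmonic : p.Monic)
    (hdvd : p ∣ Polynomial.X ^ r - 1) :
    ∀ N D : (Polynomial ℤ ⧸ Ideal.span {p}) →+ (Polynomial ℤ ⧸ Ideal.span {p}),
      N = AddMonoidHom.mulLeft
            (Ideal.Quotient.mk (Ideal.span {p}) (∑ i ∈ Finset.range r, Polynomial.X ^ i)) →
      D = AddMonoidHom.mulLeft (Ideal.Quotient.mk (Ideal.span {p}) (Polynomial.X - 1)) →
      (∀ q : N.ker ⧸ (D.range.addSubgroupOf N.ker),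
          ∃ (m : ℤ) (h : ((m : Polynomial ℤ ⧸ Ideal.span {p})) ∈ N.ker),
            q = QuotientAddGroup.mk ⟨(m : Polynomial ℤ ⧸ Ideal.span {p}), h⟩) ∧
      (p.eval 1 = 0 → ∀ q : N.ker ⧸ (D.range.addSubgroupOf N.ker), q = 0) ∧
      (p.eval 1 ≠ 0 →
        Nat.card (N.ker ⧸ (D.range.addSubgroupOf N.ker)) = (p.eval 1).natAbs) := by
  intro N D hN hD
  have hmk0 : ∀ f : Polynomial ℤ, Ideal.Quotient.mk (Ideal.span {p}) f = 0 ↔ p ∣ f := by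
    intro f
    rw [Ideal.Quotient.eq_zero_iff_mem, Ideal.mem_span_singleton]
  have hcast : ∀ m : ℤ, ((m : Polynomial ℤ ⧸ Ideal.span {p}))
      = Ideal.Quotient.mk (Ideal.span {p}) (C m) := by
    intro m
    have h2 : (C m : Polynomial ℤ) = ((m : ℤ) : Polynomial ℤ) := by simp
    rw [h2, map_intCast]
  have hDapp : ∀ a, D a = Ideal.Quotient.mk (Ideal.span {p}) (X - 1) * a := by
    intro a; rw [hD]; rfl
  have hNapp : ∀ a, N a
      = Ideal.Quotient.mk (Ideal.span {p}) (∑ i ∈ Finset.range r, X ^ i) * a := by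
    intro a; rw [hN]; rfl
  by_cases h1 : p.eval 1 = 0
  · -- p(1) = 0 : H¹ is trivial
    obtain ⟨p₂, hp2⟩ : (X - C 1 : Polynomial ℤ) ∣ p := dvd_iff_isRoot.mpr h1
    have hXne : (X - C 1 : Polynomial ℤ) ≠ 0 := X_sub_C_ne_zero 1
    have hp2ne : p₂ ≠ 0 := by
      rintro rfl
      rw [mul_zero] at hp2
      exact hmonic.ne_zero hp2
    obtain ⟨t, ht⟩ : p₂ ∣ ∑ i ∈ Finset.range r, X ^ i := by
      obtain ⟨u, hu⟩ := hdvd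
      refine ⟨u, mul_left_cancel₀ hXne ?_⟩
      calc (X - C 1) * (∑ i ∈ Finset.range r, X ^ i)
          = X ^ r - 1 := by
            rw [mul_comm]
            simpa using geom_sum_mul (X : Polynomial ℤ) r
        _ = (X - C 1) * (p₂ * u) := by rw [hu, hp2]; ring
    have ht1 : t.eval 1 ≠ 0 := by
      have hr' : (r : ℤ) = p₂.eval 1 * t.eval 1 := by
        have := congrArg (eval 1) ht
        simpa using this
      intro h0
      rw [h0, mul_zero] at hr'
      omega
    have htriv : ∀ q : N.ker ⧸ (D.range.addSubgroupOf N.ker), q = 0 := by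
      intro q
      induction q using QuotientAddGroup.induction_on with
      | H a =>
        rw [QuotientAddGroup.eq_zero_iff, AddSubgroup.mem_addSubgroupOf]
        obtain ⟨f, hf⟩ := Ideal.Quotient.mk_surjective (a : Polynomial ℤ ⧸ Ideal.span {p})
        have ha := a.2
        rw [AddMonoidHom.mem_ker, hNapp] at ha
        have hps : p ∣ (∑ i ∈ Finset.range r, X ^ i) * f := by
          rw [← hmk0, map_mul, hf]
          exact ha
        obtain ⟨w, hw⟩ := hps
        have hcanc : t * f = (X - C 1) * w := by
          apply mul_left_cancel₀ hp2ne
          calc p₂ * (t * f) = (p₂ * t) * f := by ring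
            _ = (∑ i ∈ Finset.range r, X ^ i) * f := by rw [← ht]
            _ = p * w := hw
            _ = p₂ * ((X - C 1) * w) := by rw [hp2]; ring
        have hf1 : f.eval 1 = 0 := by
          have := congrArg (eval 1) hcanc
          simp only [eval_mul, eval_sub, eval_X, eval_C, sub_self, zero_mul] at this
          rcases mul_eq_zero.mp this with h | h
          · exact absurd h ht1
          · exact h
        obtain ⟨g, hg⟩ := dvd_iff_isRoot.mpr hf1
        refine ⟨Ideal.Quotient.mk (Ideal.span {p}) g, ?_⟩
        rw [hDapp, ← map_mul, ← hf]
        exact congrArg _ (by rw [hg, C_1])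
    refine ⟨?_, fun _ => htriv, fun hne => absurd h1 hne⟩
    intro q
    have h0 : ((0 : ℤ) : Polynomial ℤ ⧸ Ideal.span {p}) ∈ N.ker := by
      simp [AddMonoidHom.mem_ker]
    refine ⟨0, h0, ?_⟩
    rw [htriv q]
    have : (⟨((0 : ℤ) : Polynomial ℤ ⧸ Ideal.span {p}), h0⟩ : N.ker) = 0 := by
      ext; simp
    rw [this]
    rfl
  · -- p(1) ≠ 0
    have hps := p_dvd_geom_sum r p hmonic hdvd h1
    have hSmk : Ideal.Quotient.mk (Ideal.span {p}) (∑ i ∈ Finset.range r, X ^ i) = 0 :=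
      (hmk0 _).mpr hps
    have hkerall : ∀ a : Polynomial ℤ ⧸ Ideal.span {p}, a ∈ N.ker := by
      intro a
      rw [AddMonoidHom.mem_ker, hNapp, hSmk, zero_mul]
    have rep : ∀ a : Polynomial ℤ ⧸ Ideal.span {p}, ∃ (m : ℤ)
        (g : Polynomial ℤ ⧸ Ideal.span {p}),
        a - (m : Polynomial ℤ ⧸ Ideal.span {p})
          = Ideal.Quotient.mk (Ideal.span {p}) (X - 1) * g := by
      intro a
      obtain ⟨f, rfl⟩ := Ideal.Quotient.mk_surjective a
      obtain ⟨g0, hg0⟩ := X_sub_C_dvd_sub_C_eval (a := (1 : ℤ)) (p := f)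
      refine ⟨f.eval 1, Ideal.Quotient.mk (Ideal.span {p}) g0, ?_⟩
      rw [hcast, ← map_sub, ← map_mul]
      exact congrArg _ (by rw [hg0, C_1])
    have hgen : ∀ q : N.ker ⧸ (D.range.addSubgroupOf N.ker),
        ∃ (m : ℤ) (h : ((m : Polynomial ℤ ⧸ Ideal.span {p})) ∈ N.ker),
          q = QuotientAddGroup.mk ⟨(m : Polynomial ℤ ⧸ Ideal.span {p}), h⟩ := by
      intro q
      induction q using QuotientAddGroup.induction_on with
      | H a =>
        obtain ⟨m, g, hg⟩ := rep (a : Polynomial ℤ ⧸ Ideal.span {p})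
        refine ⟨m, hkerall _, ?_⟩
        rw [QuotientAddGroup.eq, AddSubgroup.mem_addSubgroupOf]
        refine ⟨-g, ?_⟩
        rw [hDapp]
        show (Ideal.Quotient.mk (Ideal.span {p})) (X - 1) * -g
          = -(a : Polynomial ℤ ⧸ Ideal.span {p}) + (m : Polynomial ℤ ⧸ Ideal.span {p})
        rw [show ∀ x y : Polynomial ℤ ⧸ Ideal.span {p}, x * -y = -(x * y) from
          fun x y => by ring]
        show -((Ideal.Quotient.mk (Ideal.span {p})) (X - 1) * g)
          = -(a : Polynomial ℤ ⧸ Ideal.span {p}) + (m : Polynomial ℤ ⧸ Ideal.span {p})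
        rw [← hg]
        ring
    refine ⟨hgen, fun h => absurd h h1, fun _ => ?_⟩
    let φ : ℤ →+ (N.ker ⧸ D.range.addSubgroupOf N.ker) :=
      (QuotientAddGroup.mk' _).comp
        ((Int.castAddHom (Polynomial ℤ ⧸ Ideal.span {p})).codRestrict N.ker
          (fun m => hkerall _))
    have hφ : ∀ m : ℤ, φ m
        = QuotientAddGroup.mk ⟨(m : Polynomial ℤ ⧸ Ideal.span {p}), hkerall _⟩ := fun m => rfl
    have hsurj : Function.Surjective φ := by
      intro q
      obtain ⟨m, h, hq⟩ := hgen q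
      exact ⟨m, by rw [hq]; exact hφ m⟩
    have hker : φ.ker = AddSubgroup.zmultiples (p.eval 1) := by
      ext m
      rw [AddMonoidHom.mem_ker, Int.mem_zmultiples_iff]
      constructor
      · intro hm
        rw [hφ, QuotientAddGroup.eq_zero_iff, AddSubgroup.mem_addSubgroupOf] at hm
        obtain ⟨g, hg⟩ := hm
        obtain ⟨g0, rfl⟩ := Ideal.Quotient.mk_surjective g
        have hz : Ideal.Quotient.mk (Ideal.span {p}) ((X - 1) * g0 - C m) = 0 := by
          rw [map_sub, map_mul, ← hcast]
          rw [hDapp] at hg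
          rw [hg]
          simp
        rw [hmk0] at hz
        obtain ⟨w, hw⟩ := hz
        have := congrArg (eval 1) hw
        simp only [eval_sub, eval_mul, eval_X, eval_one, eval_C, sub_self, zero_mul,
          zero_sub] at this
        exact ⟨-(w.eval 1), by linarith⟩
      · intro hm
        obtain ⟨k, hk⟩ := hm
        rw [hφ, QuotientAddGroup.eq_zero_iff, AddSubgroup.mem_addSubgroupOf]
        obtain ⟨u0, hu0⟩ := X_sub_C_dvd_sub_C_eval (a := (1 : ℤ)) (p := p)
        refine ⟨Ideal.Quotient.mk (Ideal.span {p}) (-(u0 * C k)), ?_⟩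
        rw [hDapp, ← map_mul, hcast, Ideal.Quotient.mk_eq_mk_iff_sub_mem,
          Ideal.mem_span_singleton]
        refine ⟨-(C k), ?_⟩
        have hCp : C (p.eval 1) = p - (X - C 1) * u0 := by rw [← hu0]; ring
        simp only [C_1] at hCp
        rw [hk, C_mul, hCp]
        ring
    have e := QuotientAddGroup.quotientKerEquivOfSurjective φ hsurj
    calc Nat.card (N.ker ⧸ D.range.addSubgroupOf N.ker)
        = Nat.card (ℤ ⧸ φ.ker) := (Nat.card_congr e.toEquiv).symm
      _ = Nat.card (ℤ ⧸ AddSubgroup.zmultiples (p.eval 1)) := by rw [hker]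
      _ = Nat.card (ZMod (p.eval 1).natAbs) :=
          Nat.card_congr (Int.quotientZMultiplesEquivZMod _).toEquiv
      _ = (p.eval 1).natAbs := Nat.card_zmod _
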